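/- Soundness of the randomized parity test for symmetric connection requests: Let V be a finite set, R a finite set of unordered pairs of distinct elements of V, and C ⊆ V a set such that some request {u, v} ∈ R has u ∈ C and v ∉ C. If c is drawn uniformly at random from the finite set of all functions R → ℤ/2ℤ (i.e., the bits c(r), r ∈ R, are independent fair coins), then the probability that the aggregated sum Σ_{u ∈ C} Σ_{v : {u,v} ∈ R} c({u, v}) equals 0 in ℤ/2ℤ is exactly 1/2. -/
import Mathlib

lemma half_aux {α : Type*} [Fintype α] [Nonempty α] [DecidableEq α] (S : α → ZMod 2)
    (f : α → α) (hff : ∀ a, f (f a) = a) (hSf : ∀ a, S (f a) = S a + 1) :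
    ((Finset.univ.filter (fun a => S a = 0)).card : ℝ) /
      ((Finset.univ : Finset α).card : ℝ) = 1 / 2 := by
  classical
  have hcard : (Finset.univ.filter (fun a => S a = 0)).card
      = (Finset.univ.filter (fun a => S a = 1)).card := by
    apply Finset.card_nbij' f f
    · intro a ha
      simp only [Finset.mem_coe, Finset.mem_filter, Finset.mem_univ, true_and] at ha ⊢
      rw [hSf, ha]; rfl
    · intro a ha
      simp only [Finset.mem_coe, Finset.mem_filter, Finset.mem_univ, true_and] at ha ⊢
      rw [hSf, ha]; rfl
    · intro a _; exact hff a
    · intro a _; exact hff a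
  have hiff : ∀ a : ZMod 2, (a = 1 ↔ ¬ a = 0) := by decide
  have h2 : Finset.univ.filter (fun a => S a = 1)
      = Finset.univ.filter (fun a => ¬ S a = 0) := by
    apply Finset.filter_congr
    intro a _
    exact hiff (S a)
  have hsplit : (Finset.univ.filter (fun a => S a = 0)).card
      + (Finset.univ.filter (fun a => S a = 1)).card
      = (Finset.univ : Finset α).card := by
    rw [h2]
    exact Finset.card_filter_add_card_filter_not (p := fun a => S a = 0)
  have hpos : (0 : ℝ) < ((Finset.univ : Finset α).card : ℝ) := by
    exact_mod_cast Finset.card_pos.mpr Finset.univ_nonempty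
  have h0 : ((Finset.univ.filter (fun a => S a = 0)).card : ℝ) * 2
      = ((Finset.univ : Finset α).card : ℝ) := by
    rw [← hsplit, ← hcard]; push_cast; ring
  have hx : (0 : ℝ) < ((Finset.univ.filter (fun a => S a = 0)).card : ℝ) := by linarith
  rw [← h0]
  rw [div_eq_div_iff (by linarith) (by norm_num)]
  ring

/-- Soundness of the randomized parity test for symmetric
connection requests: if some request `{u, v} ∈ R` crosses the cut defined by
`C` (i.e. `u ∈ C`, `v ∉ C`), then for `c` drawn uniformly at random from all
functions `R → ℤ/2ℤ`, the probability that the aggregated sum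
`Σ_{u ∈ C} Σ_{v : {u,v} ∈ R} c {u, v}` is `0` in `ℤ/2ℤ` is exactly `1/2`. -/
theorem parity_test_soundness {V : Type*} [Fintype V] [DecidableEq V]
    (R : Finset (Sym2 V)) (hR : ∀ e ∈ R, ¬ e.IsDiag)
    (C : Finset V)
    (hcross : ∃ u v : V, s(u, v) ∈ R ∧ u ∈ C ∧ v ∉ C) :
    ((Finset.univ.filter (fun c : ({e : Sym2 V // e ∈ R} → ZMod 2) =>
          ∑ u ∈ C, ∑ e ∈ R.attach.filter (fun e => u ∈ e.1), c e = 0)).card : ℝ) /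
        ((Finset.univ : Finset ({e : Sym2 V // e ∈ R} → ZMod 2)).card : ℝ) = 1 / 2 := by
  classical
  obtain ⟨u, v, huv, huC, hvC⟩ := hcross
  let e0 : {e : Sym2 V // e ∈ R} := ⟨s(u, v), huv⟩
  have h11 : (1 : ZMod 2) + 1 = 0 := rfl
  apply half_aux (fun c => ∑ w ∈ C, ∑ e ∈ R.attach.filter (fun e => w ∈ e.1), c e)
    (fun c => Function.update c e0 (c e0 + 1))
  · intro c
    funext e
    by_cases h : e = e0
    · subst h
      simp only [Function.update_self]
      rw [add_assoc, h11, add_zero]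
    · simp [Function.update_of_ne h]
  · intro c
    have hupd : ∀ e, Function.update c e0 (c e0 + 1) e
        = c e + if e = e0 then 1 else 0 := by
      intro e
      by_cases h : e = e0
      · subst h; simp
      · simp [Function.update_of_ne h, h]
    simp only [hupd, Finset.sum_add_distrib]
    congr 1
    have h1 : ∀ w : V, ∑ e ∈ R.attach.filter (fun e => w ∈ e.1),
        (if e = e0 then (1 : ZMod 2) else 0) = if w ∈ e0.1 then 1 else 0 := by
      intro w
      rw [Finset.sum_ite_eq' _ e0 (fun _ => (1 : ZMod 2))]
      simp [Finset.mem_filter]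
    simp only [h1]
    have h2 : ∀ w ∈ C, (if w ∈ e0.1 then (1 : ZMod 2) else 0)
        = if w = u then 1 else 0 := by
      intro w hw
      have hm : w ∈ e0.1 ↔ w = u := by
        simp only [e0, Sym2.mem_iff]
        constructor
        · rintro (rfl | rfl)
          · rfl
          · exact absurd hw hvC
        · intro h; exact Or.inl h
      simp [hm]
    rw [Finset.sum_congr rfl h2, Finset.sum_ite_eq' C u (fun _ => (1 : ZMod 2))]
    simp [huC]
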